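/- Let σ > 0, β ∈ (0,1], and x ≥ σ·β^{1/4}. Then y(x) − 2·x·c(x) ≤ 0 if and only if −3·(x/σ)⁶ + (1+2β)·(x/σ)⁴ + (β²+6β)·(x/σ)² + β² ≤ 0, i.e., if and only if f((x/σ)²) ≤ 0 where f(z) = −3·z³ + (2β+1)·z² + (β²+6β)·z + β². Equivalently, the condition y(x)² + x² − 2·x·y(x)·c(x) ≤ x² for the hard-threshold comparison holds exactly when f((x/σ)²) ≤ 0. -/

import Mathlib

/-- For `σ > 0`, `β ∈ (0,1]`, `x ≥ σ·β^{1/4}`, with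
`y(x) = σ·√((x/σ + σ/x)(x/σ + βσ/x))` and `c(x) = √(((x/σ)⁴ − β)/((x/σ)⁴ + β(x/σ)²))`:
`y(x) − 2xc(x) ≤ 0` iff `−3(x/σ)⁶ + (1+2β)(x/σ)⁴ + (β²+6β)(x/σ)² + β² ≤ 0`, i.e. iff
`f((x/σ)²) ≤ 0` where `f(z) = −3z³ + (2β+1)z² + (β²+6β)z + β²`; equivalently, the
hard-threshold comparison `y(x)² + x² − 2x·y(x)·c(x) ≤ x²` holds exactly when
`f((x/σ)²) ≤ 0`. -/
theorem svht_comparison_iff_cubic (σ β x : ℝ) (hσ : 0 < σ) (hβ0 : 0 < β) (hβ1 : β ≤ 1)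
    (hx : σ * β ^ ((1 : ℝ) / 4) ≤ x)
    (yx cx : ℝ)
    (hyx : yx = σ * Real.sqrt ((x / σ + σ / x) * (x / σ + β * σ / x)))
    (hcx : cx = Real.sqrt (((x / σ) ^ 4 - β) / ((x / σ) ^ 4 + β * (x / σ) ^ 2))) :
    (yx - 2 * x * cx ≤ 0 ↔
      -3 * (x / σ) ^ 6 + (1 + 2 * β) * (x / σ) ^ 4 + (β ^ 2 + 6 * β) * (x / σ) ^ 2 + β ^ 2
        ≤ 0) ∧
    (yx - 2 * x * cx ≤ 0 ↔
      -3 * ((x / σ) ^ 2) ^ 3 + (2 * β + 1) * ((x / σ) ^ 2) ^ 2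
        + (β ^ 2 + 6 * β) * ((x / σ) ^ 2) + β ^ 2 ≤ 0) ∧
    (yx ^ 2 + x ^ 2 - 2 * x * yx * cx ≤ x ^ 2 ↔
      -3 * ((x / σ) ^ 2) ^ 3 + (2 * β + 1) * ((x / σ) ^ 2) ^ 2
        + (β ^ 2 + 6 * β) * ((x / σ) ^ 2) + β ^ 2 ≤ 0) := by
  have hrpow : 0 < β ^ ((1 : ℝ) / 4) := Real.rpow_pos_of_pos hβ0 _
  have hx0 : 0 < x := lt_of_lt_of_le (mul_pos hσ hrpow) hx
  set t : ℝ := x / σ with ht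
  have ht0 : 0 < t := div_pos hx0 hσ
  have htr : β ^ ((1 : ℝ) / 4) ≤ t := (le_div_iff₀ hσ).2 (by linarith [hx])
  have htβ : β ≤ t ^ 4 := by
    have h4 : (β ^ ((1 : ℝ) / 4)) ^ (4 : ℕ) ≤ t ^ 4 := pow_le_pow_left₀ hrpow.le htr 4
    have : (β ^ ((1 : ℝ) / 4)) ^ (4 : ℕ) = β := by
      rw [← Real.rpow_natCast (β ^ ((1:ℝ)/4)) 4, ← Real.rpow_mul hβ0.le]
      norm_num
    linarith [h4, this.symm.le]
  have hxt : x = σ * t := by rw [ht]; field_simp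
  have hD : 0 < t ^ 4 + β * t ^ 2 := by positivity
  have harg : 0 ≤ (x / σ + σ / x) * (x / σ + β * σ / x) := by positivity
  have hc0 : 0 ≤ cx := hcx ▸ Real.sqrt_nonneg _
  have hy0 : 0 < yx := by
    rw [hyx]
    have : 0 < (x / σ + σ / x) * (x / σ + β * σ / x) := by positivity
    exact mul_pos hσ (Real.sqrt_pos.2 this)
  have hc2 : cx ^ 2 = (t ^ 4 - β) / (t ^ 4 + β * t ^ 2) := by
    rw [hcx, Real.sq_sqrt]
    exact div_nonneg (by linarith) hD.le
  have hy2 : yx ^ 2 = σ ^ 2 * ((t ^ 2 + 1) * (t ^ 2 + β)) / t ^ 2 := by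
    rw [hyx, mul_pow, Real.sq_sqrt harg]
    rw [ht]; field_simp
  -- main equivalence: yx ≤ 2*x*cx ↔ f ≤ 0
  have key : yx ≤ 2 * x * cx ↔
      -3 * t ^ 6 + (1 + 2 * β) * t ^ 4 + (β ^ 2 + 6 * β) * t ^ 2 + β ^ 2 ≤ 0 := by
    have h2xc : 0 ≤ 2 * x * cx := by positivity
    have hsq : yx ≤ 2 * x * cx ↔ yx ^ 2 ≤ (2 * x * cx) ^ 2 := by
      constructor
      · intro h; exact pow_le_pow_left₀ hy0.le h 2
      · intro h; exact le_of_pow_le_pow_left₀ two_ne_zero h2xc h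
    rw [hsq]
    have hrhs : (2 * x * cx) ^ 2 = (4 * σ ^ 2 * t ^ 2 * (t ^ 4 - β)) / (t ^ 4 + β * t ^ 2) := by
      rw [mul_pow, hc2, hxt]; ring
    rw [hrhs, hy2, div_le_div_iff₀ (by positivity) hD]
    have hst : 0 < σ ^ 2 * t ^ 2 := by positivity
    have e1 : σ ^ 2 * ((t ^ 2 + 1) * (t ^ 2 + β)) * (t ^ 4 + β * t ^ 2)
        = (σ ^ 2 * t ^ 2) * ((t ^ 2 + 1) * (t ^ 2 + β) ^ 2) := by ring
    have e2 : 4 * σ ^ 2 * t ^ 2 * (t ^ 4 - β) * t ^ 2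
        = (σ ^ 2 * t ^ 2) * (4 * t ^ 2 * (t ^ 4 - β)) := by ring
    have e3 : (t ^ 2 + 1) * (t ^ 2 + β) ^ 2 - 4 * t ^ 2 * (t ^ 4 - β)
        = -3 * t ^ 6 + (1 + 2 * β) * t ^ 4 + (β ^ 2 + 6 * β) * t ^ 2 + β ^ 2 := by ring
    rw [e1, e2, mul_le_mul_iff_of_pos_left hst]
    constructor <;> intro h <;> linarith [e3]
  have heq : yx - 2 * x * cx ≤ 0 ↔ yx ≤ 2 * x * cx := sub_nonpos
  have hf : -3 * t ^ 6 + (1 + 2 * β) * t ^ 4 + (β ^ 2 + 6 * β) * t ^ 2 + β ^ 2 =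
      -3 * (t ^ 2) ^ 3 + (2 * β + 1) * (t ^ 2) ^ 2 + (β ^ 2 + 6 * β) * t ^ 2 + β ^ 2 := by ring
  refine ⟨heq.trans key, (heq.trans key).trans (by rw [hf]), ?_⟩
  have h3 : yx ^ 2 + x ^ 2 - 2 * x * yx * cx ≤ x ^ 2 ↔ yx ≤ 2 * x * cx := by
    constructor
    · intro h
      have : yx * yx ≤ (2 * x * cx) * yx := by nlinarith [h]
      exact le_of_mul_le_mul_right (by linarith [this]) hy0
    · intro h
      nlinarith [mul_le_mul_of_nonneg_right h hy0.le]
  exact (h3.trans key).trans (by rw [hf])
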